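/- Let n ≥ 1, λ = 16·log(40n), t > 0. Suppose A has full row rank, (x, s) ∈ P° × D°, and Φ((xs − t·1)/t) ≤ 16n. Let x̄, s̄ ∈ ℝ^n_{>0} satisfy ‖ln x̄ − ln x‖_∞ ≤ 1/48 and ‖ln s̄ − ln s‖_∞ ≤ 1/48 (componentwise logarithms), let δ̄_μ ∈ ℝ^n with ‖δ̄_μ‖₂ ≤ t/(32λ), and let (δ_x, δ_s, δ_y) solve S̄ δ_x + X̄ δ_s = δ̄_μ, A δ_x = 0, Aᵀ δ_y + δ_s = 0, where X̄ = Diag(x̄), S̄ = Diag(s̄). Then ‖xs − t·1‖_∞ ≤ t/16, ‖δ_x/x‖₂ ≤ 1/(16λ), and ‖δ_s/s‖₂ ≤ 1/(16λ). -/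

import Mathlib

open Matrix

/-- The ℓ2 norm. -/
noncomputable def l2 {n : ℕ} (u : Fin n → ℝ) : ℝ := Real.sqrt (∑ i, (u i) ^ 2)

/-- The ℓ∞ norm. -/
noncomputable def linf {n : ℕ} (u : Fin n → ℝ) : ℝ := ⨆ i, |u i|

lemma exp_inv48_le : Real.exp (1/48) ≤ 48/47 := by
  have h := Real.add_one_le_exp (-(1/48 : ℝ))
  have h1 : (47:ℝ)/48 ≤ Real.exp (-(1/48)) := by linarith
  have h2 : Real.exp (1/48) * Real.exp (-(1/48)) = 1 := by
    rw [← Real.exp_add]; norm_num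
  nlinarith [Real.exp_pos (1/48 : ℝ)]

lemma ratio_aux {a b : ℝ} (ha : 0 < a) (hb : 0 < b)
    (h : Real.log a - Real.log b ≤ 1/48) : a ≤ (48/47) * b := by
  have h1 : Real.log a ≤ Real.log b + 1/48 := by linarith
  calc a = Real.exp (Real.log a) := (Real.exp_log ha).symm
    _ ≤ Real.exp (Real.log b + 1/48) := Real.exp_le_exp.2 h1
    _ = b * Real.exp (1/48) := by rw [Real.exp_add, Real.exp_log hb]
    _ ≤ b * (48/47) := by nlinarith [exp_inv48_le]
    _ = (48/47) * b := by ring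

set_option maxHeartbeats 2000000

/-- Basic bounds on a robust step: under the invariant `Φ((xs − t·1)/t) ≤ 16n` with
`λ = 16 log(40n)`, and a step solving the barred Newton system with
`‖δ̄μ‖₂ ≤ t/(32λ)`, one has `‖xs − t·1‖_∞ ≤ t/16`, `‖δx/x‖₂ ≤ 1/(16λ)` and
`‖δs/s‖₂ ≤ 1/(16λ)`. -/
theorem robust_step_basic {d n : ℕ} (hn : 1 ≤ n)
    (A : Matrix (Fin d) (Fin n) ℝ) (b : Fin d → ℝ) (c : Fin n → ℝ)
    (hA : A.rank = d)
    (t : ℝ) (ht : 0 < t)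
    (x s : Fin n → ℝ)
    (hx : A.mulVec x = b ∧ ∀ i, 0 < x i)
    (hs : (∃ y : Fin d → ℝ, Aᵀ.mulVec y + s = c) ∧ ∀ i, 0 < s i)
    (lam : ℝ) (hlam : lam = 16 * Real.log (40 * n))
    (hΦ : ∑ i, Real.cosh (lam * ((x i * s i - t) / t)) ≤ 16 * n)
    (xb sb : Fin n → ℝ) (hxb : ∀ i, 0 < xb i) (hsb : ∀ i, 0 < sb i)
    (hxc : linf (fun i => Real.log (xb i) - Real.log (x i)) ≤ 1 / 48)
    (hsc : linf (fun i => Real.log (sb i) - Real.log (s i)) ≤ 1 / 48)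
    (δμb : Fin n → ℝ) (hδμb : l2 δμb ≤ t / (32 * lam))
    (δx δs : Fin n → ℝ) (δy : Fin d → ℝ)
    (hsys : (Matrix.diagonal sb).mulVec δx + (Matrix.diagonal xb).mulVec δs = δμb ∧
            A.mulVec δx = 0 ∧ Aᵀ.mulVec δy + δs = 0) :
    linf (fun i => x i * s i - t) ≤ t / 16 ∧
    l2 (fun i => δx i / x i) ≤ 1 / (16 * lam) ∧
    l2 (fun i => δs i / s i) ≤ 1 / (16 * lam) := by
  obtain ⟨hsys1, hsys2, hsys3⟩ := hsys
  obtain ⟨-, hxpos⟩ := hx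
  obtain ⟨-, hspos⟩ := hs
  have hn0 : (1:ℝ) ≤ n := by exact_mod_cast hn
  have hlog : (0:ℝ) < Real.log (40 * n) := Real.log_pos (by nlinarith)
  have hlampos : 0 < lam := by rw [hlam]; linarith
  have hne : Nonempty (Fin n) := ⟨⟨0, hn⟩⟩
  -- Part 1, pointwise
  have habs : ∀ y : ℝ, Real.exp |y| ≤ 2 * Real.cosh y := by
    intro y
    rw [Real.cosh_eq]
    rcases abs_cases y with ⟨h1, _⟩ | ⟨h1, _⟩ <;> rw [h1] <;>
      nlinarith [Real.exp_pos y, Real.exp_pos (-y)]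
  have key1 : ∀ i, |x i * s i - t| ≤ t / 16 := by
    intro i
    have hcosh : Real.cosh (lam * ((x i * s i - t) / t)) ≤ 16 * n := by
      refine le_trans ?_ hΦ
      exact Finset.single_le_sum (f := fun j => Real.cosh (lam * ((x j * s j - t) / t)))
        (fun j _ => (Real.cosh_pos _).le) (Finset.mem_univ i)
    have h40 : Real.exp (lam * |(x i * s i - t) / t|) ≤ Real.exp (Real.log (40 * n)) := by
      rw [Real.exp_log (by nlinarith)]
      calc Real.exp (lam * |(x i * s i - t) / t|)
          = Real.exp |lam * ((x i * s i - t) / t)| := by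
            rw [abs_mul, abs_of_pos hlampos]
        _ ≤ 2 * Real.cosh (lam * ((x i * s i - t) / t)) := habs _
        _ ≤ 2 * (16 * n) := by linarith
        _ ≤ 40 * n := by nlinarith
    have hle : lam * |(x i * s i - t) / t| ≤ lam * (1/16) := by
      have h := Real.exp_le_exp.1 h40
      calc lam * |(x i * s i - t) / t| ≤ Real.log (40 * n) := h
        _ = lam * (1/16) := by rw [hlam]; ring
    have hrle : |(x i * s i - t) / t| ≤ 1/16 := le_of_mul_le_mul_left hle hlampos
    have hteq : x i * s i - t = t * ((x i * s i - t) / t) := by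
      field_simp
    rw [hteq, abs_mul, abs_of_pos ht]
    nlinarith [abs_nonneg ((x i * s i - t) / t)]
  have part1 : linf (fun i => x i * s i - t) ≤ t/16 := by
    simp only [linf]
    exact ciSup_le fun i => key1 i
  -- lower bound on x i * s i
  have hxs : ∀ i, 15 * t / 16 ≤ x i * s i := by
    intro i
    have h := abs_le.1 (key1 i)
    linarith [h.1]
  -- ratio bounds
  have hpt : ∀ (u v : Fin n → ℝ), linf (fun i => Real.log (u i) - Real.log (v i)) ≤ 1/48 →
      ∀ i, |Real.log (u i) - Real.log (v i)| ≤ 1/48 := by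
    intro u v h i
    refine le_trans ?_ h
    simp only [linf]
    exact le_ciSup (f := fun j => |Real.log (u j) - Real.log (v j)|)
      (Set.Finite.bddAbove (Set.finite_range _)) i
  have hxc' := hpt xb x hxc
  have hsc' := hpt sb s hsc
  have hxb_le : ∀ i, xb i ≤ 48/47 * x i := fun i =>
    ratio_aux (hxb i) (hxpos i) (abs_le.1 (hxc' i)).2
  have hx_le : ∀ i, x i ≤ 48/47 * xb i := fun i =>
    ratio_aux (hxpos i) (hxb i) (by linarith [(abs_le.1 (hxc' i)).1])
  have hsb_le : ∀ i, sb i ≤ 48/47 * s i := fun i =>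
    ratio_aux (hsb i) (hspos i) (abs_le.1 (hsc' i)).2
  have hs_le : ∀ i, s i ≤ 48/47 * sb i := fun i =>
    ratio_aux (hspos i) (hsb i) (by linarith [(abs_le.1 (hsc' i)).1])
  -- orthogonality
  have horth : ∑ i, δx i * δs i = 0 := by
    have hδs' : δs = -(Aᵀ.mulVec δy) := by
      funext i
      have h := congrFun hsys3 i
      simp only [Pi.add_apply, Pi.zero_apply, Pi.neg_apply] at h ⊢
      linarith
    calc ∑ i, δx i * δs i = δx ⬝ᵥ δs := rfl
      _ = δx ⬝ᵥ -(Aᵀ.mulVec δy) := by rw [hδs']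
      _ = -(δx ⬝ᵥ Aᵀ.mulVec δy) := by rw [dotProduct_neg]
      _ = -((A.mulVec δx) ⬝ᵥ δy) := by rw [Matrix.dotProduct_mulVec, Matrix.vecMul_transpose]
      _ = 0 := by rw [hsys2]; simp
  -- pointwise Newton equation
  have heq : ∀ i, sb i * δx i + xb i * δs i = δμb i := by
    intro i
    have h := congrFun hsys1 i
    simpa [Matrix.mulVec_diagonal] using h
  -- key identity summed
  have hiden : ∀ i, sb i / xb i * δx i ^ 2 + xb i / sb i * δs i ^ 2 + 2 * (δx i * δs i)
      = δμb i ^ 2 / (xb i * sb i) := by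
    intro i
    rw [← heq i]
    have h1 := (hxb i).ne'
    have h2 := (hsb i).ne'
    field_simp
    ring
  have hsum : ∑ i, sb i / xb i * δx i ^ 2 + ∑ i, xb i / sb i * δs i ^ 2
      = ∑ i, δμb i ^ 2 / (xb i * sb i) := by
    have h := Finset.sum_congr rfl (fun i (_ : i ∈ Finset.univ) => hiden i)
    rw [Finset.sum_add_distrib, Finset.sum_add_distrib, ← Finset.mul_sum, horth] at h
    linarith
  have hP : (0:ℝ) ≤ ∑ i, sb i / xb i * δx i ^ 2 :=
    Finset.sum_nonneg fun i _ => mul_nonneg (div_nonneg (hsb i).le (hxb i).le) (sq_nonneg _)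
  have hQ : (0:ℝ) ≤ ∑ i, xb i / sb i * δs i ^ 2 :=
    Finset.sum_nonneg fun i _ => mul_nonneg (div_nonneg (hxb i).le (hsb i).le) (sq_nonneg _)
  -- bound on R
  have hδμb2 : ∑ i, δμb i ^ 2 ≤ (t / (32 * lam)) ^ 2 := by
    have h1 : (0:ℝ) ≤ ∑ i, δμb i ^ 2 := Finset.sum_nonneg fun i _ => sq_nonneg _
    have h2 : Real.sqrt (∑ i, δμb i ^ 2) ≤ t / (32 * lam) := hδμb
    nlinarith [Real.sq_sqrt h1, Real.sqrt_nonneg (∑ i, δμb i ^ 2)]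
  have hm : ∀ i, (47/48:ℝ)^2 * (15/16) * t ≤ xb i * sb i := by
    intro i
    have h1 := hx_le i
    have h2 := hs_le i
    have h3 := hxs i
    have h4 : x i * s i ≤ 48/47 * xb i * (48/47 * sb i) :=
      mul_le_mul h1 h2 (hspos i).le (mul_nonneg (by norm_num) (hxb i).le)
    nlinarith [h3, h4]
  have hmpos : (0:ℝ) < (47/48:ℝ)^2 * (15/16) * t := by positivity
  have hRbound : ∑ i, δμb i ^ 2 / (xb i * sb i)
      ≤ (t / (32 * lam)) ^ 2 / ((47/48:ℝ)^2 * (15/16) * t) := by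
    calc ∑ i, δμb i ^ 2 / (xb i * sb i)
        ≤ ∑ i, δμb i ^ 2 / ((47/48:ℝ)^2 * (15/16) * t) := by
          refine Finset.sum_le_sum fun i _ => ?_
          rw [div_le_div_iff₀ (mul_pos (hxb i) (hsb i)) hmpos]
          nlinarith [sq_nonneg (δμb i), hm i]
      _ = (∑ i, δμb i ^ 2) / ((47/48:ℝ)^2 * (15/16) * t) := by
          rw [Finset.sum_div]
      _ ≤ (t / (32 * lam)) ^ 2 / ((47/48:ℝ)^2 * (15/16) * t) := by
          gcongr
  -- pointwise constant bound (for x)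
  have hCx : ∀ i, 1 / (x i) ^ 2 ≤ (48/47:ℝ)^2 * (16/(15*t)) * (sb i / xb i) := by
    intro i
    have h1 := hxb_le i
    have h2 := hs_le i
    have h3 := hxs i
    have hxi := hxpos i
    have hsi := hspos i
    have hxbi := hxb i
    have hsbi := hsb i
    have hgoal : 1 / (x i) ^ 2 ≤ ((48/47:ℝ)^2 * 16 * sb i) / (15 * t * xb i) := by
      rw [div_le_div_iff₀ (by positivity) (by positivity)]
      have ha2 : 15*t*xb i ≤ 15*t*(48/47 * x i) := by nlinarith
      have hb2 : 15*t ≤ 16*(x i * s i) := by linarith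
      have hc2 : 15*t*(48/47 * x i) ≤ 16*(x i * s i)*(48/47 * x i) :=
        mul_le_mul_of_nonneg_right hb2 (by positivity)
      have he2 : (48/47:ℝ)*16*(x i^2)*s i ≤ (48/47)*16*(x i^2)*(48/47 * sb i) :=
        mul_le_mul_of_nonneg_left h2 (by positivity)
      nlinarith
    calc 1 / (x i) ^ 2 ≤ ((48/47:ℝ)^2 * 16 * sb i) / (15 * t * xb i) := hgoal
      _ = (48/47:ℝ)^2 * (16/(15*t)) * (sb i / xb i) := by
          field_simp
  have hCs : ∀ i, 1 / (s i) ^ 2 ≤ (48/47:ℝ)^2 * (16/(15*t)) * (xb i / sb i) := by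
    intro i
    have h1 := hsb_le i
    have h2 := hx_le i
    have h3 := hxs i
    have hxi := hxpos i
    have hsi := hspos i
    have hxbi := hxb i
    have hsbi := hsb i
    have hgoal : 1 / (s i) ^ 2 ≤ ((48/47:ℝ)^2 * 16 * xb i) / (15 * t * sb i) := by
      rw [div_le_div_iff₀ (by positivity) (by positivity)]
      have ha2 : 15*t*sb i ≤ 15*t*(48/47 * s i) := by nlinarith
      have hb2 : 15*t ≤ 16*(x i * s i) := by linarith
      have hc2 : 15*t*(48/47 * s i) ≤ 16*(x i * s i)*(48/47 * s i) :=
        mul_le_mul_of_nonneg_right hb2 (by positivity)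
      have he2 : (48/47:ℝ)*16*(s i^2)*x i ≤ (48/47)*16*(s i^2)*(48/47 * xb i) :=
        mul_le_mul_of_nonneg_left h2 (by positivity)
      nlinarith
    calc 1 / (s i) ^ 2 ≤ ((48/47:ℝ)^2 * 16 * xb i) / (15 * t * sb i) := hgoal
      _ = (48/47:ℝ)^2 * (16/(15*t)) * (xb i / sb i) := by
          field_simp
  -- sum bounds on ratios
  have hsumx : ∑ i, (δx i / x i) ^ 2
      ≤ (48/47:ℝ)^2 * (16/(15*t)) * ∑ i, sb i / xb i * δx i ^ 2 := by
    rw [Finset.mul_sum]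
    refine Finset.sum_le_sum fun i _ => ?_
    have h := hCx i
    have h0 := sq_nonneg (δx i)
    calc (δx i / x i) ^ 2 = δx i ^ 2 * (1 / (x i) ^ 2) := by
          rw [div_pow]; ring
      _ ≤ δx i ^ 2 * ((48/47:ℝ)^2 * (16/(15*t)) * (sb i / xb i)) := by nlinarith
      _ = (48/47:ℝ)^2 * (16/(15*t)) * (sb i / xb i * δx i ^ 2) := by ring
  have hsums : ∑ i, (δs i / s i) ^ 2
      ≤ (48/47:ℝ)^2 * (16/(15*t)) * ∑ i, xb i / sb i * δs i ^ 2 := by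
    rw [Finset.mul_sum]
    refine Finset.sum_le_sum fun i _ => ?_
    have h := hCs i
    have h0 := sq_nonneg (δs i)
    calc (δs i / s i) ^ 2 = δs i ^ 2 * (1 / (s i) ^ 2) := by
          rw [div_pow]; ring
      _ ≤ δs i ^ 2 * ((48/47:ℝ)^2 * (16/(15*t)) * (xb i / sb i)) := by nlinarith
      _ = (48/47:ℝ)^2 * (16/(15*t)) * (xb i / sb i * δs i ^ 2) := by ring
  -- final numeric bound
  have hfinal : (48/47:ℝ)^2 * (16/(15*t)) *
      ((t / (32 * lam)) ^ 2 / ((47/48:ℝ)^2 * (15/16) * t)) ≤ (1 / (16 * lam)) ^ 2 := by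
    have ht' := ht.ne'
    have hl' := hlampos.ne'
    have heq2 : (48/47:ℝ)^2 * (16/(15*t)) *
        ((t / (32 * lam)) ^ 2 / ((47/48:ℝ)^2 * (15/16) * t))
        = (48:ℝ)^4*16^2/(47^4*15^2*1024) * (1/lam^2) := by
      field_simp
      ring
    have heq3 : (1 / (16 * lam)) ^ 2 = (1/256 : ℝ) * (1/lam^2) := by
      field_simp
      ring
    rw [heq2, heq3]
    have hcon : (48:ℝ)^4*16^2/(47^4*15^2*1024) ≤ 1/256 := by norm_num
    exact mul_le_mul_of_nonneg_right hcon (by positivity)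
  have hCpos : (0:ℝ) ≤ (48/47:ℝ)^2 * (16/(15*t)) := by positivity
  have hxfin : ∑ i, (δx i / x i) ^ 2 ≤ (1 / (16 * lam)) ^ 2 := by
    calc ∑ i, (δx i / x i) ^ 2
        ≤ (48/47:ℝ)^2 * (16/(15*t)) * ∑ i, sb i / xb i * δx i ^ 2 := hsumx
      _ ≤ (48/47:ℝ)^2 * (16/(15*t)) * ((t / (32 * lam)) ^ 2 / ((47/48:ℝ)^2 * (15/16) * t)) := by
          refine mul_le_mul_of_nonneg_left ?_ hCpos
          linarith [hRbound, hsum, hQ]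
      _ ≤ (1 / (16 * lam)) ^ 2 := hfinal
  have hsfin : ∑ i, (δs i / s i) ^ 2 ≤ (1 / (16 * lam)) ^ 2 := by
    calc ∑ i, (δs i / s i) ^ 2
        ≤ (48/47:ℝ)^2 * (16/(15*t)) * ∑ i, xb i / sb i * δs i ^ 2 := hsums
      _ ≤ (48/47:ℝ)^2 * (16/(15*t)) * ((t / (32 * lam)) ^ 2 / ((47/48:ℝ)^2 * (15/16) * t)) := by
          refine mul_le_mul_of_nonneg_left ?_ hCpos
          linarith [hRbound, hsum, hP]
      _ ≤ (1 / (16 * lam)) ^ 2 := hfinal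
  refine ⟨part1, ?_, ?_⟩
  · simp only [l2]
    calc Real.sqrt (∑ i, (δx i / x i) ^ 2) ≤ Real.sqrt ((1 / (16 * lam)) ^ 2) :=
          Real.sqrt_le_sqrt hxfin
      _ = 1 / (16 * lam) := Real.sqrt_sq (by positivity)
  · simp only [l2]
    calc Real.sqrt (∑ i, (δs i / s i) ^ 2) ≤ Real.sqrt ((1 / (16 * lam)) ^ 2) :=
          Real.sqrt_le_sqrt hsfin
      _ = 1 / (16 * lam) := Real.sqrt_sq (by positivity)
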